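/- Let J be a graph admitting a proper k-coloring φ such that for every pair of distinct colors a, b used by φ, the subgraph of J induced by the vertices colored a or b is connected (a 'frozen' coloring). Let J′ be obtained from J by adding a new vertex v adjacent to every vertex of J, and extend φ to a (k+1)-coloring φ′ of J′ by giving v a new color. Then for every pair of distinct colors a, b used by φ′, the subgraph of J′ induced by the vertices colored a or b under φ′ is connected. -/

import Mathlib

open SimpleGraph

/-- The spanning subgraph of `G` consisting of the edges both of whose endpoints
receive color `i` or color `j` under `φ`. -/
def kempeSubgraph {V : Type*} (G : SimpleGraph V) {k : ℕ} (φ : V → Fin k) (i j : Fin k) :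
    SimpleGraph V where
  Adj u v := G.Adj u v ∧ (φ u = i ∨ φ u = j) ∧ (φ v = i ∨ φ v = j)
  symm := ⟨fun u v ⟨h, hu, hv⟩ => ⟨h.symm, hv, hu⟩⟩
  loopless := ⟨fun v h => h.1.ne rfl⟩

/-- `ψ` is obtained from `φ` by a single `i,j`-Kempe swap:  the colors `i` and `j` are
interchanged on the connected component (of the subgraph induced by colors `i,j`)
containing `w`, and nothing else changes. -/
def IsKempeSwap {V : Type*} (G : SimpleGraph V) {k : ℕ}
    (φ ψ : G.Coloring (Fin k)) : Prop :=
  ∃ (i j : Fin k) (w : V), ∀ v : V,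
    ((kempeSubgraph G (fun x => φ x) i j).Reachable w v → ψ v = Equiv.swap i j (φ v)) ∧
    (¬ (kempeSubgraph G (fun x => φ x) i j).Reachable w v → ψ v = φ v)

/-- Kempe `k`-equivalence of proper `k`-colorings:  one can be transformed into the
other by a sequence of Kempe swaps. -/
def KempeEquiv {V : Type*} (G : SimpleGraph V) (k : ℕ)
    (φ ψ : G.Coloring (Fin k)) : Prop :=
  Relation.EqvGen (IsKempeSwap G) φ ψ

/-- `Kc G k` is the number of Kempe equivalence classes of proper `k`-colorings of `G`. -/
noncomputable def Kc {V : Type*} (G : SimpleGraph V) (k : ℕ) : ℕ :=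
  Nat.card (Quot (KempeEquiv G k))

/-- `G` can be obtained from a bipartite graph by adding `ℓ` edges. -/
def BipartitePlus {V : Type*} (G : SimpleGraph V) (ℓ : ℕ) : Prop :=
  ∃ E : Finset (Sym2 V), E.card = ℓ ∧ ↑E ⊆ G.edgeSet ∧
    (G.deleteEdges ↑E).Colorable 2

/-- The graph obtained from `J` by adding a new dominating vertex (`none`). -/
def addDominating {V : Type*} (J : SimpleGraph V) : SimpleGraph (Option V) where
  Adj u v := u ≠ v ∧ ∀ a b : V, u = some a → v = some b → J.Adj a b
  symm := by
    constructor
    rintro u v ⟨hne, h⟩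
    exact ⟨hne.symm, fun a b ha hb => (h b a hb ha).symm⟩
  loopless := ⟨fun u h => h.1 rfl⟩

lemma aux_none_connected {V : Type*} (J : SimpleGraph V) (S : Set (Option V))
    (h : none ∈ S) : ((addDominating J).induce S).Connected := by
  rw [SimpleGraph.connected_iff_exists_forall_reachable]
  refine ⟨⟨none, h⟩, ?_⟩
  rintro ⟨u, hu⟩
  cases u with
  | none => exact SimpleGraph.Reachable.refl _
  | some x =>
    refine SimpleGraph.Adj.reachable ?_
    show (addDominating J).Adj none (some x)
    exact ⟨by simp, fun p q hp hq => by cases hp⟩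


/-- If `φ` is a frozen `k`-coloring of `J` (each pair of used color classes induces a
connected subgraph) and `φ'` extends `φ` to `J' = J` plus a dominating vertex, with
the new vertex getting the new color, then `φ'` is frozen as well. -/
theorem stmt13 {V : Type*} (J : SimpleGraph V) (k : ℕ) (φ : J.Coloring (Fin k))
    (hfrozen : ∀ a b : Fin k, a ≠ b →
      a ∈ Set.range (fun v => φ v) → b ∈ Set.range (fun v => φ v) →
      (J.induce {v : V | φ v = a ∨ φ v = b}).Connected)
    (φ' : Option V → Fin (k + 1))
    (hsome : ∀ v : V, φ' (some v) = Fin.castSucc (φ v))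
    (hnone : φ' none = Fin.last k) :
    ∀ a b : Fin (k + 1), a ≠ b → a ∈ Set.range φ' → b ∈ Set.range φ' →
      ((addDominating J).induce {v : Option V | φ' v = a ∨ φ' v = b}).Connected := by
  intro a b hab ha hb
  by_cases hA : a = Fin.last k
  · exact aux_none_connected J _ (Or.inl (hnone.trans hA.symm))
  by_cases hB : b = Fin.last k
  · exact aux_none_connected J _ (Or.inr (hnone.trans hB.symm))
  · -- both colors are old colors
    set a' := a.castPred hA with ha'
    set b' := b.castPred hB with hb'
    have hca : Fin.castSucc a' = a := Fin.castSucc_castPred a hA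
    have hcb : Fin.castSucc b' = b := Fin.castSucc_castPred b hB
    have hne : a' ≠ b' := fun h => hab (by rw [← hca, ← hcb, h])
    have hmem : ∀ (c : Fin (k+1)) (hc : c ≠ Fin.last k), c ∈ Set.range φ' →
        c.castPred hc ∈ Set.range (fun v => φ v) := by
      rintro c hc ⟨u, hu⟩
      cases u with
      | none => exact absurd ((hnone.symm.trans hu).symm) hc
      | some v =>
        refine ⟨v, ?_⟩
        have : Fin.castSucc (φ v) = Fin.castSucc (c.castPred hc) := by
          rw [← hsome v, hu, Fin.castSucc_castPred]
        exact (Fin.castSucc_injective k this).symm ▸ rfl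
    have hJ := hfrozen a' b' hne (hmem a hA ha) (hmem b hB hb)
    have hmemS : ∀ x : V, (φ x = a' ∨ φ x = b') → φ' (some x) = a ∨ φ' (some x) = b := by
      intro x hx
      rw [hsome x]
      rcases hx with h | h
      · left; rw [h, hca]
      · right; rw [h, hcb]
    let f : J.induce {v : V | φ v = a' ∨ φ v = b'} →g
        (addDominating J).induce {v : Option V | φ' v = a ∨ φ' v = b} :=
      { toFun := fun x => ⟨some x.1, hmemS x.1 x.2⟩
        map_rel' := by
          rintro x y hxy
          have hadj : J.Adj x.1 y.1 := hxy
          refine ⟨?_, fun p q hp hq => ?_⟩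
          · simpa using hadj.ne
          · cases hp; cases hq; exact hadj }
    have hsurj : Function.Surjective f := by
      rintro ⟨u, hu⟩
      cases u with
      | none =>
        exfalso
        rcases hu with h | h
        · exact hA (hnone.symm.trans h).symm
        · exact hB (hnone.symm.trans h).symm
      | some v =>
        have hv : φ v = a' ∨ φ v = b' := by
          rcases hu with h | h
          · left
            exact Fin.castSucc_injective k ((hsome v).symm.trans (h.trans hca.symm))
          · right
            exact Fin.castSucc_injective k ((hsome v).symm.trans (h.trans hcb.symm))
        exact ⟨⟨v, hv⟩, rfl⟩
    exact SimpleGraph.Connected.map f hsurj hJ
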